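/- Let A = (Q, δ, I, F) be an NFA over α with finite state set Q, let q ∈ Q, q_f ∈ F, and let R be a relation on Q with R q q_f. If t is a least solution to the transformation automaton A[R] and s is a least solution to A, then t(id) ⊴ s(q), where id is the identity relation on Q. -/

import Mathlib

/-- Homomorphic extension of `h : α → K` to regular expressions. -/
def interp {α : Type*} {K : Type*} [KleeneAlgebra K] (h : α → K) :
    RegularExpression α → K
  | .zero => 0
  | .epsilon => 1
  | .char a => h a
  | .plus e f => interp h e + interp h f
  | .comp e f => interp h e * interp h f
  | .star e => KStar.kstar (interp h e)

universe u

/-- `e ⊴ f`: under every interpretation into any Kleene algebra, `ĥ e ≤ ĥ f`. -/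
def kle {α : Type*} (e f : RegularExpression α) : Prop :=
  ∀ (K : Type u) [KleeneAlgebra K] (h : α → K), interp h e ≤ interp h f

/-- Composition of relations: `(S ∘ T) q q'' ↔ ∃ q', S q q' ∧ T q' q''`. -/
def relComp {Q : Type*} (S T : Q → Q → Prop) : Q → Q → Prop :=
  fun q q'' => ∃ q', S q q' ∧ T q' q''

/-- The relation `δ_a = {(q, q') : q' ∈ δ q a}` induced by letter `a` in the NFA `A`. -/
def deltaRel {α Q : Type*} (A : NFA α Q) (a : α) : Q → Q → Prop :=
  fun q q' => q' ∈ A.step q a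

/-- A solution to the `R`-transformation automaton `A[R]`: its states are the relations on
`Q`, the sole accepting state is `R`, and each state `S` has an `a`-transition to
`S ∘ δ_a`. -/
def RelSolution {α Q : Type*} (A : NFA α Q) (R : Q → Q → Prop)
    (s : (Q → Q → Prop) → RegularExpression α) : Prop :=
  kle.{u} 1 (s R) ∧
  ∀ (S : Q → Q → Prop) (a : α),
    kle.{u} (RegularExpression.char a * s (relComp S (deltaRel A a))) (s S)

/-- A least solution to the transformation automaton `A[R]`. -/
def LeastRelSolution {α Q : Type*} (A : NFA α Q) (R : Q → Q → Prop)
    (s : (Q → Q → Prop) → RegularExpression α) : Prop :=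
  RelSolution.{u} A R s ∧
  ∀ s' : (Q → Q → Prop) → RegularExpression α, RelSolution.{u} A R s' →
    ∀ S : Q → Q → Prop, kle.{u} (s S) (s' S)

/-- A solution to the NFA `A`. -/
def AutSolution {α Q : Type*} (A : NFA α Q) (s : Q → RegularExpression α) : Prop :=
  (∀ q ∈ A.accept, kle.{u} 1 (s q)) ∧
  ∀ (q : Q) (a : α) (q' : Q), q' ∈ A.step q a →
    kle.{u} (RegularExpression.char a * s q') (s q)

/-- A least solution to the NFA `A`. -/
def LeastAutSolution {α Q : Type*} (A : NFA α Q) (s : Q → RegularExpression α) : Prop :=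
  AutSolution.{u} A s ∧
  ∀ s' : Q → RegularExpression α, AutSolution.{u} A s' → ∀ q, kle.{u} (s q) (s' q)


noncomputable section

/-- Sum of a family of regular expressions over a list of indices. -/
def reSum {α ι : Type*} (l : List ι) (f : ι → RegularExpression α) : RegularExpression α :=
  l.foldr (fun i e => f i + e) 0

lemma interp_mul' {α : Type*} {K : Type u} [KleeneAlgebra K] (h : α → K)
    (e f : RegularExpression α) : interp h (e * f) = interp h e * interp h f := rfl

lemma le_interp_reSum {α ι : Type*} {K : Type u} [KleeneAlgebra K] (h : α → K)
    {l : List ι} {f : ι → RegularExpression α} {i : ι} (hi : i ∈ l) :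
    interp h (f i) ≤ interp h (reSum l f) := by
  induction l with
  | nil => cases hi
  | cons j l ih =>
      have : interp h (reSum (j :: l) f) = interp h (f j) + interp h (reSum l f) := rfl
      rw [this]
      rcases List.mem_cons.mp hi with rfl | hi
      · exact le_add_right le_rfl
      · exact (ih hi).trans (le_add_left le_rfl)

lemma interp_reSum_le {α ι : Type*} {K : Type u} [KleeneAlgebra K] (h : α → K)
    {l : List ι} {f : ι → RegularExpression α} {c : K}
    (hall : ∀ i ∈ l, interp h (f i) ≤ c) : interp h (reSum l f) ≤ c := by
  induction l with
  | nil => exact zero_le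
  | cons j l ih =>
      have : interp h (reSum (j :: l) f) = interp h (f j) + interp h (reSum l f) := rfl
      rw [this]
      exact add_le (hall j List.mem_cons_self)
        (ih fun i hi => hall i (List.mem_cons_of_mem j hi))

lemma mul_interp_reSum_le {α ι : Type*} {K : Type u} [KleeneAlgebra K] (h : α → K)
    {l : List ι} {f : ι → RegularExpression α} {x c : K}
    (hall : ∀ i ∈ l, x * interp h (f i) ≤ c) : x * interp h (reSum l f) ≤ c := by
  induction l with
  | nil =>
      have : interp h (reSum ([] : List ι) f) = 0 := rfl
      rw [this, mul_zero]
      exact zero_le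
  | cons j l ih =>
      have : interp h (reSum (j :: l) f) = interp h (f j) + interp h (reSum l f) := rfl
      rw [this, mul_add]
      exact add_le (hall j List.mem_cons_self)
        (ih fun i hi => hall i (List.mem_cons_of_mem j hi))

end

/-- If `R` relates `q` to an accepting state, then the least solution of the transformation
automaton `A[R]` at `id` is below the least solution of `A` at `q`. -/
theorem transformation_solution_below {α : Type*} {Q : Type*} [Finite Q]
    (A : NFA α Q) (q qf : Q) (hqf : qf ∈ A.accept) (R : Q → Q → Prop) (hR : R q qf)
    (t : (Q → Q → Prop) → RegularExpression α) (ht : LeastRelSolution.{u} A R t)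
    (s : Q → RegularExpression α) (hs : LeastAutSolution.{u} A s) :
    kle.{u} (t Eq) (s q) := by
  classical
  obtain ⟨⟨hsacc, hsstep⟩, -⟩ := hs
  obtain ⟨-, htleast⟩ := ht
  haveI : Fintype Q := Fintype.ofFinite Q
  set t' : (Q → Q → Prop) → RegularExpression α :=
    fun S => reSum (Finset.univ.filter (fun q'' => S q q'')).toList s with ht'
  have hmem : ∀ (S : Q → Q → Prop) (q'' : Q), S q q'' →
      q'' ∈ (Finset.univ.filter (fun q'' => S q q'')).toList := by
    intro S q'' hS
    rw [Finset.mem_toList, Finset.mem_filter]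
    exact ⟨Finset.mem_univ _, hS⟩
  have hsol : RelSolution.{u} A R t' := by
    constructor
    · intro K _ h
      exact (hsacc qf hqf K h).trans (le_interp_reSum h (hmem R qf hR))
    · intro S a K _ h
      rw [ht', interp_mul']
      refine mul_interp_reSum_le h ?_
      intro q'' hq''
      rw [Finset.mem_toList, Finset.mem_filter] at hq''
      obtain ⟨-, q', hSq', hstep⟩ := hq''
      have h1 : interp h (RegularExpression.char a * s q'') ≤ interp h (s q') :=
        hsstep q' a q'' hstep K h
      rw [interp_mul'] at h1
      exact h1.trans (le_interp_reSum h (hmem S q' hSq'))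
  intro K _ h
  refine (htleast t' hsol Eq K h).trans ?_
  refine interp_reSum_le h ?_
  intro q'' hq''
  rw [Finset.mem_toList, Finset.mem_filter] at hq''
  obtain ⟨-, rfl⟩ := hq''
  exact le_rfl
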